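/- Let c ∈ [0,1] be a point of the ternary Cantor set C with ternary expansion (c_n) ∈ {0,2}^ℕ, and suppose infinitely many c_n equal 0 (enumerated increasingly as (i_n)). Define d_1 = 1, d_{2k} = 1 − Σ_{j=1}^{k-1} 2/3^{i_j} − 1/3^{i_k}, and d_{2k+1} = 1 − Σ_{j=1}^{k-1} 2/3^{i_j} − 2/3^{i_k}. Then each d_n belongs to C, has finite ternary expansion, d_n > c for all n, and (d_n) converges to c. -/

import Mathlib

open Set Filter

/-- The ternary Cantor set: points of `[0,1]` with a ternary expansion using digits 0 and 2. -/
def ternaryCantorSet : Set ℝ :=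
  {x | x ∈ Icc (0:ℝ) 1 ∧ ∃ g : ℕ → ℕ, (∀ n, g n = 0 ∨ g n = 2) ∧
    x = ∑' n : ℕ, (g n : ℝ) / 3 ^ (n + 1)}

lemma sgeo : Summable (fun n : ℕ => (2:ℝ)/3^(n+1)) := by
  have : (fun n : ℕ => (2:ℝ)/3^(n+1)) = fun n => (2/3) * (1/3)^n := by
    funext n; rw [pow_succ, one_div, inv_pow]; ring
  rw [this]
  exact (summable_geometric_of_lt_one (by norm_num) (by norm_num)).mul_left _

lemma geo : ∑' n : ℕ, (2:ℝ)/3^(n+1) = 1 := by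
  have : (fun n : ℕ => (2:ℝ)/3^(n+1)) = fun n => (2/3) * (1/3)^n := by
    funext n; rw [pow_succ, one_div, inv_pow]; ring
  rw [this, tsum_mul_left, tsum_geometric_of_lt_one (by norm_num) (by norm_num)]
  norm_num

lemma geo_tail (N : ℕ) : ∑' i : ℕ, (2:ℝ)/3^(i+N+1) = 1/3^N := by
  have : (fun i : ℕ => (2:ℝ)/3^(i+N+1)) = fun i => (1/3^N) * (2/3^(i+1)) := by
    funext i; rw [show i+N+1 = (i+1)+N by ring, pow_add]; ring
  rw [this, tsum_mul_left, geo]; ring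

lemma geo_fin (N : ℕ) : ∑ n ∈ Finset.range N, (2:ℝ)/3^(n+1) = 1 - 1/3^N := by
  induction N with
  | zero => simp
  | succ N ih =>
    rw [Finset.sum_range_succ, ih, pow_succ]
    field_simp
    ring_nf

lemma sdig (g : ℕ → ℕ) (hg : ∀ n, (g n:ℝ) ≤ 2) : Summable (fun n => (g n:ℝ)/3^(n+1)) := by
  apply Summable.of_nonneg_of_le (fun n => by positivity) (fun n => ?_) sgeo
  gcongr
  exact hg n

lemma fin_exp (g : ℕ → ℕ) (M : ℕ) :
    ∃ z : ℤ, ∑ n ∈ Finset.range M, (g n : ℝ)/3^(n+1) = (z:ℝ)/3^M := by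
  induction M with
  | zero => exact ⟨0, by simp⟩
  | succ M ih =>
    obtain ⟨z, hz⟩ := ih
    refine ⟨3*z + g M, ?_⟩
    rw [Finset.sum_range_succ, hz]
    push_cast
    rw [pow_succ]
    field_simp

noncomputable def Fc (digit : ℕ → ℕ) (m : ℕ) : ℝ :=
  ∑ n ∈ Finset.range (m+1), (digit n:ℝ)/3^(n+1)

noncomputable def tlc (digit : ℕ → ℕ) (m : ℕ) : ℝ :=
  ∑' i : ℕ, (digit (i+(m+1)):ℝ)/3^((i+(m+1))+1)

lemma mem_cantor (g : ℕ → ℕ) (hg : ∀ n, g n = 0 ∨ g n = 2) :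
    (∑' n, (g n:ℝ)/3^(n+1)) ∈ ternaryCantorSet := by
  have hle : ∀ n, (g n:ℝ) ≤ 2 := fun n => by rcases hg n with h|h <;> simp [h]
  refine ⟨⟨tsum_nonneg (fun n => by positivity), ?_⟩, g, hg, rfl⟩
  calc ∑' n, (g n:ℝ)/3^(n+1) ≤ ∑' n : ℕ, (2:ℝ)/3^(n+1) :=
        Summable.tsum_le_tsum (fun n => by gcongr; exact hle n) (sdig g hle) sgeo
    _ = 1 := geo

lemma Fc_def (digit : ℕ → ℕ) (m : ℕ) :
    Fc digit m = ∑ n ∈ Finset.range (m+1), (digit n:ℝ)/3^(n+1) := rfl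

lemma tlc_def (digit : ℕ → ℕ) (m : ℕ) :
    tlc digit m = ∑' i : ℕ, (digit (i+(m+1)):ℝ)/3^((i+(m+1))+1) := rfl

lemma hle2' (digit : ℕ → ℕ) (hdig : ∀ n, digit n = 0 ∨ digit n = 2) (n : ℕ) :
    (digit n:ℝ) ≤ 2 := by rcases hdig n with h|h <;> simp [h]

lemma hsumc (digit : ℕ → ℕ) (hdig : ∀ n, digit n = 0 ∨ digit n = 2) :
    Summable (fun n => (digit n:ℝ)/3^(n+1)) := sdig _ (hle2' digit hdig)

lemma hsplit (digit : ℕ → ℕ) (hdig : ∀ n, digit n = 0 ∨ digit n = 2) (m : ℕ) :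
    Fc digit m + tlc digit m = ∑' n : ℕ, (digit n : ℝ)/3^(n+1) :=
  Summable.sum_add_tsum_nat_add (m+1) (hsumc digit hdig)

lemma tail_nonneg (digit : ℕ → ℕ) (m : ℕ) : 0 ≤ tlc digit m :=
  tsum_nonneg (fun i => by positivity)

lemma tail_le (digit : ℕ → ℕ) (hdig : ∀ n, digit n = 0 ∨ digit n = 2) (m : ℕ) :
    tlc digit m ≤ 1/3^(m+1) := by
  have hs1 : Summable (fun i : ℕ => (digit (i+(m+1)):ℝ)/3^((i+(m+1))+1)) :=
    (summable_nat_add_iff (f := fun n => (digit n:ℝ)/3^(n+1)) (m+1)).2 (hsumc digit hdig)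
  have hs2 : Summable (fun i : ℕ => (2:ℝ)/3^((i+(m+1))+1)) :=
    (summable_nat_add_iff (f := fun n : ℕ => (2:ℝ)/3^(n+1)) (m+1)).2 sgeo
  rw [tlc_def]
  calc ∑' i : ℕ, (digit (i+(m+1)):ℝ)/3^((i+(m+1))+1)
      ≤ ∑' i : ℕ, (2:ℝ)/3^(i+(m+1)+1) :=
        Summable.tsum_le_tsum (fun i => by gcongr; exact hle2' digit hdig _) hs1 hs2
    _ = 1/3^(m+1) := geo_tail (m+1)

lemma tail_lt (digit : ℕ → ℕ) (hdig : ∀ n, digit n = 0 ∨ digit n = 2)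
    (I : ℕ → ℕ) (hI : StrictMono I) (hI0 : ∀ k, digit (I k) = 0) (m : ℕ) :
    tlc digit m < 1/3^(m+1) := by
  have hs1 : Summable (fun i : ℕ => (digit (i+(m+1)):ℝ)/3^((i+(m+1))+1)) :=
    (summable_nat_add_iff (f := fun n => (digit n:ℝ)/3^(n+1)) (m+1)).2 (hsumc digit hdig)
  have hs2 : Summable (fun i : ℕ => (2:ℝ)/3^((i+(m+1))+1)) :=
    (summable_nat_add_iff (f := fun n : ℕ => (2:ℝ)/3^(n+1)) (m+1)).2 sgeo
  have hp : m + 1 ≤ I (m+1) := hI.le_apply (x := m+1)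
  have h0 : digit ((I (m+1) - (m+1)) + (m+1)) = 0 := by
    rw [Nat.sub_add_cancel hp]; exact hI0 _
  rw [tlc_def]
  calc ∑' i : ℕ, (digit (i+(m+1)):ℝ)/3^((i+(m+1))+1)
      < ∑' i : ℕ, (2:ℝ)/3^(i+(m+1)+1) := by
        refine Summable.tsum_lt_tsum (i := I (m+1) - (m+1))
          (fun i => by gcongr; exact hle2' digit hdig _) ?_ hs1 hs2
        rw [h0]; simp only [Nat.cast_zero, zero_div]; positivity
    _ = 1/3^(m+1) := geo_tail (m+1)

lemma himg (digit : ℕ → ℕ) (hdig : ∀ n, digit n = 0 ∨ digit n = 2)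
    (I : ℕ → ℕ) (hI : StrictMono I) (hI0 : ∀ k, digit (I k) = 0)
    (hIall : ∀ n, digit n = 0 → ∃ k, I k = n) (k : ℕ) :
    ∑ n ∈ Finset.range (I k + 1), (2 - (digit n:ℝ))/3^(n+1)
    = ∑ j ∈ Finset.range (k+1), 2/(3:ℝ)^(I j+1) := by
  have h1 : (Finset.range (k+1)).image I ⊆ Finset.range (I k + 1) := by
    intro n hn
    simp only [Finset.mem_image, Finset.mem_range] at *
    obtain ⟨j, hj, rfl⟩ := hn
    exact Nat.lt_succ_of_le (hI.monotone (by omega))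
  have h2 : ∀ n ∈ Finset.range (I k + 1), n ∉ (Finset.range (k+1)).image I →
      (2 - (digit n:ℝ))/3^(n+1) = 0 := by
    intro n hn hn2
    rcases hdig n with h|h
    · exfalso
      obtain ⟨j, hj⟩ := hIall n h
      apply hn2
      simp only [Finset.mem_image, Finset.mem_range]
      refine ⟨j, ?_, hj⟩
      have hle : I j ≤ I k := by
        simp only [Finset.mem_range] at hn; omega
      exact Nat.lt_succ_of_le (hI.le_iff_le.mp hle)
    · simp [h]
  rw [← Finset.sum_subset h1 h2, Finset.sum_image (fun a _ b _ h => hI.injective h)]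
  refine Finset.sum_congr rfl (fun j _ => ?_)
  rw [hI0 j]
  norm_num

lemma keyF (digit : ℕ → ℕ) (hdig : ∀ n, digit n = 0 ∨ digit n = 2)
    (I : ℕ → ℕ) (hI : StrictMono I) (hI0 : ∀ k, digit (I k) = 0)
    (hIall : ∀ n, digit n = 0 → ∃ k, I k = n) (k : ℕ) :
    Fc digit (I k) = (1 - 1/3^(I k + 1)) - ∑ j ∈ Finset.range (k+1), 2/(3:ℝ)^(I j + 1) := by
  have h : Fc digit (I k)
      = ∑ n ∈ Finset.range (I k + 1), ((2:ℝ)/3^(n+1) - (2 - (digit n:ℝ))/3^(n+1)) := by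
    rw [Fc_def]
    refine Finset.sum_congr rfl (fun n _ => ?_); ring
  rw [h, Finset.sum_sub_distrib, geo_fin, himg digit hdig I hI hI0 hIall]

lemma exp_even (digit : ℕ → ℕ) (I : ℕ → ℕ) (hI0 : ∀ k, digit (I k) = 0) (k : ℕ) :
    ∑' n, ((if n < I k then digit n else if n = I k then 2 else 0 : ℕ) : ℝ)/3^(n+1)
      = Fc digit (I k) + 2/3^(I k + 1) := by
  set g : ℕ → ℕ := fun n => if n < I k then digit n else if n = I k then 2 else 0 with hg
  have hz : ∀ n ∉ Finset.range (I k + 1), (g n:ℝ)/3^(n+1) = 0 := by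
    intro n hn
    simp only [Finset.mem_range] at hn
    have h1 : ¬ n < I k := by omega
    have h2 : n ≠ I k := by omega
    simp [hg, h1, h2]
  rw [tsum_eq_sum hz, Finset.sum_range_succ]
  have hgI : g (I k) = 2 := by simp [hg]
  have hFk : Fc digit (I k) = ∑ n ∈ Finset.range (I k), (digit n:ℝ)/3^(n+1) := by
    rw [Fc_def, Finset.sum_range_succ, hI0 k]
    norm_num
  rw [hgI, hFk]
  congr 1
  refine Finset.sum_congr rfl (fun n hn => ?_)
  simp only [Finset.mem_range] at hn
  simp [hg, hn]

lemma exp_odd (digit : ℕ → ℕ) (hdig : ∀ n, digit n = 0 ∨ digit n = 2)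
    (I : ℕ → ℕ) (k : ℕ) :
    ∑' n, ((if n ≤ I k then digit n else 2 : ℕ) : ℝ)/3^(n+1)
      = Fc digit (I k) + 1/3^(I k + 1) := by
  set g : ℕ → ℕ := fun n => if n ≤ I k then digit n else 2 with hg
  have hgle : ∀ n, (g n:ℝ) ≤ 2 := by
    intro n
    by_cases h : n ≤ I k
    · simpa [hg, h] using hle2' digit hdig n
    · simp [hg, h]
  rw [← Summable.sum_add_tsum_nat_add (I k + 1) (sdig g hgle)]
  congr 1
  · rw [Fc_def]
    refine Finset.sum_congr rfl (fun n hn => ?_)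
    simp only [Finset.mem_range] at hn
    have hle : n ≤ I k := by omega
    simp [hg, hle]
  · have h : ∀ i : ℕ, (g (i + (I k + 1)):ℝ)/3^((i + (I k + 1))+1) = 2/3^(i+(I k + 1)+1) := by
      intro i
      have h1 : ¬ (i + (I k + 1) ≤ I k) := by omega
      simp [hg, h1]
    rw [tsum_congr h, geo_tail (I k + 1)]

/-- Let `c` be a point of the ternary Cantor set with ternary digits `(c_n) ∈ {0,2}^ℕ` having
infinitely many zeros, enumerated increasingly by `I` (so the paper's `i_k` is `I (k-1) + 1`).
Define `d 1 = 1`, `d (2k) = 1 − Σ_{j=1}^{k-1} 2/3^{i_j} − 1/3^{i_k}` and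
`d (2k+1) = 1 − Σ_{j=1}^{k-1} 2/3^{i_j} − 2/3^{i_k}`. Then each `d n` (`n ≥ 1`) belongs to the
Cantor set, has finite ternary expansion, satisfies `d n > c`, and `(d n)` converges to `c`. -/
theorem stmt10 (c : ℝ) (digit : ℕ → ℕ)
    (hdig : ∀ n, digit n = 0 ∨ digit n = 2)
    (hc : c = ∑' n : ℕ, (digit n : ℝ) / 3 ^ (n + 1))
    (I : ℕ → ℕ) (hI : StrictMono I)
    (hI0 : ∀ k, digit (I k) = 0)
    (hIall : ∀ n, digit n = 0 → ∃ k, I k = n)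
    (d : ℕ → ℝ)
    (hd1 : d 1 = 1)
    (hd2 : ∀ k, 1 ≤ k → d (2 * k) =
      1 - (∑ j ∈ Finset.range (k - 1), 2 / (3:ℝ) ^ (I j + 1)) - 1 / (3:ℝ) ^ (I (k - 1) + 1))
    (hd3 : ∀ k, 1 ≤ k → d (2 * k + 1) =
      1 - (∑ j ∈ Finset.range (k - 1), 2 / (3:ℝ) ^ (I j + 1)) - 2 / (3:ℝ) ^ (I (k - 1) + 1)) :
    (∀ n, 1 ≤ n → d n ∈ ternaryCantorSet ∧ (∃ N : ℕ, ∃ z : ℤ, d n = (z : ℝ) / 3 ^ N) ∧ c < d n) ∧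
    Tendsto d atTop (nhds c) := by
  have hcsplit : ∀ m, Fc digit m + tlc digit m = c := by
    intro m; rw [hc]; exact hsplit digit hdig m
  have hdeven : ∀ k, d (2*(k+1)) = Fc digit (I k) + 2/3^(I k + 1) := by
    intro k
    rw [hd2 (k+1) (by omega)]
    simp only [Nat.add_sub_cancel]
    rw [keyF digit hdig I hI hI0 hIall k, Finset.sum_range_succ]
    ring
  have hdodd : ∀ k, d (2*(k+1)+1) = Fc digit (I k) + 1/3^(I k + 1) := by
    intro k
    rw [hd3 (k+1) (by omega)]
    simp only [Nat.add_sub_cancel]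
    rw [keyF digit hdig I hI hI0 hIall k, Finset.sum_range_succ]
    ring
  have main : ∀ n, 1 ≤ n → d n ∈ ternaryCantorSet ∧
      (∃ N : ℕ, ∃ z : ℤ, d n = (z : ℝ) / 3 ^ N) ∧ c < d n := by
    intro n hn
    rcases eq_or_lt_of_le hn with h1 | h2
    · -- n = 1
      obtain rfl : n = 1 := h1.symm
      refine ⟨?_, ⟨0, 1, by simp [hd1]⟩, ?_⟩
      · rw [hd1, ← geo]
        have := mem_cantor (fun _ => 2) (fun _ => Or.inr rfl)
        simpa using this
      · rw [hd1, hc, ← geo]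
        refine Summable.tsum_lt_tsum (i := I 0) (fun n => by gcongr; exact hle2' digit hdig n) ?_
          (hsumc digit hdig) sgeo
        rw [hI0 0]
        simp only [Nat.cast_zero, zero_div]
        positivity
    · rcases Nat.even_or_odd n with ⟨t, ht⟩ | ⟨t, ht⟩
      · -- n even
        have htk : n = 2*((t-1)+1) := by omega
        set k := t - 1 with hk
        rw [htk]
        have hclt : c < d (2*(k+1)) := by
          rw [hdeven k, ← hcsplit (I k)]
          have h1 := tail_le digit hdig (I k)
          have h23 : (1:ℝ)/3^(I k + 1) < 2/3^(I k + 1) := by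
            have hp : (0:ℝ) < 3^(I k + 1) := by positivity
            rw [div_lt_div_iff₀ hp hp]
            nlinarith
          linarith
        refine ⟨?_, ?_, hclt⟩
        · rw [hdeven k, ← exp_even digit I hI0 k]
          apply mem_cantor
          intro n
          by_cases h1 : n < I k
          · simp only [h1, if_true]; exact hdig n
          · by_cases h2 : n = I k <;> simp [h1, h2]
        · obtain ⟨z, hz⟩ := fin_exp digit (I k + 1)
          refine ⟨I k + 1, z + 2, ?_⟩
          rw [hdeven k, Fc_def, hz]
          push_cast
          ring
      · -- n odd
        have htk : n = 2*((t-1)+1)+1 := by omega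
        set k := t - 1 with hk
        rw [htk]
        have hclt : c < d (2*(k+1)+1) := by
          rw [hdodd k, ← hcsplit (I k)]
          have h1 := tail_lt digit hdig I hI hI0 (I k)
          linarith
        refine ⟨?_, ?_, hclt⟩
        · rw [hdodd k, ← exp_odd digit hdig I k]
          apply mem_cantor
          intro n
          by_cases h1 : n ≤ I k
          · simp only [h1, if_true]; exact hdig n
          · simp [h1]
        · obtain ⟨z, hz⟩ := fin_exp digit (I k + 1)
          refine ⟨I k + 1, z + 1, ?_⟩
          rw [hdodd k, Fc_def, hz]
          push_cast
          ring
  refine ⟨main, ?_⟩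
  have hub : ∀ n, 2 ≤ n → d n ≤ c + 2/3^(n/2) := by
    intro n hn
    have hIk : ∀ j : ℕ, (2:ℝ)/3^(I j + 1) ≤ 2/3^(j+1) := by
      intro j
      gcongr
      · norm_num
      · have := hI.le_apply (x := j); omega
    rcases Nat.even_or_odd n with ⟨t, ht⟩ | ⟨t, ht⟩
    · have htk : n = 2*((t-1)+1) := by omega
      set k := t - 1 with hk
      have hn2 : n/2 = k+1 := by omega
      rw [hn2, htk, hdeven k, ← hcsplit (I k)]
      have h1 := tail_nonneg digit (I k)
      have h2 := hIk k
      linarith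
    · have htk : n = 2*((t-1)+1)+1 := by omega
      set k := t - 1 with hk
      have hn2 : n/2 = k+1 := by omega
      rw [hn2, htk, hdodd k, ← hcsplit (I k)]
      have h1 := tail_nonneg digit (I k)
      have h2 := hIk k
      have h3 : (1:ℝ)/3^(I k + 1) ≤ 2/3^(I k + 1) := by gcongr; norm_num
      linarith
  have hlb : ∀ n, 2 ≤ n → c ≤ d n := fun n hn => le_of_lt (main n (by omega)).2.2
  have hdiv : Tendsto (fun n : ℕ => n/2) atTop atTop :=
    tendsto_atTop_atTop.2 (fun b => ⟨2*b, fun n hn => by omega⟩)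
  have h0 : Tendsto (fun k : ℕ => (2:ℝ)/3^k) atTop (nhds 0) := by
    have h := (tendsto_pow_atTop_nhds_zero_of_lt_one (r := (1/3:ℝ)) (by norm_num)
      (by norm_num)).const_mul (2:ℝ)
    have he : (fun k : ℕ => 2 * ((1/3:ℝ))^k) = fun k : ℕ => (2:ℝ)/3^k := by
      funext k; rw [div_pow]; ring
    rw [he] at h
    simpa using h
  have hup : Tendsto (fun n : ℕ => c + 2/(3:ℝ)^(n/2)) atTop (nhds c) := by
    have hcn : Tendsto (fun _ : ℕ => c) atTop (nhds c) := tendsto_const_nhds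
    have := hcn.add (h0.comp hdiv)
    simpa using this
  refine tendsto_of_tendsto_of_tendsto_of_le_of_le' (tendsto_const_nhds) hup ?_ ?_
  · exact eventually_atTop.2 ⟨2, hlb⟩
  · exact eventually_atTop.2 ⟨2, hub⟩
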